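/- Let u(s,x) solve ∂_s²u - Δu + (μ/(1+s))∂_su = |u|^p with 1 < μ ≤ 2. Set ℓ = (2-μ)/(μ-1), Λ(t) = (1+t)^{ℓ+1}/(ℓ+1), and w(t,x) = (1+t) u(Λ(t)-1, x). Then w satisfies ∂_t²w - (1+t)^{2ℓ} Δw = (1+t)^{2ℓ-(p-1)} |w|^p. -/

import Mathlib

/-- The Laplacian of `f : ℝⁿ → ℝ`, as the sum of the second partial derivatives
in the coordinate directions. -/
noncomputable def laplacian {n : ℕ} (f : EuclideanSpace ℝ (Fin n) → ℝ)
    (x : EuclideanSpace ℝ (Fin n)) : ℝ :=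
  ∑ i : Fin n,
    fderiv ℝ (fun y => fderiv ℝ f y (EuclideanSpace.single i 1)) x
      (EuclideanSpace.single i 1)

lemma fderiv_const_mul' {E : Type*} [NormedAddCommGroup E] [NormedSpace ℝ E]
    (c : ℝ) (hc : c ≠ 0) (f : E → ℝ) (x : E) :
    fderiv ℝ (fun y => c * f y) x = c • fderiv ℝ f x := by
  by_cases h : DifferentiableAt ℝ f x
  · exact fderiv_const_mul h c
  · rw [fderiv_zero_of_not_differentiableAt h, smul_zero,
      fderiv_zero_of_not_differentiableAt]
    intro h'
    have : f = fun y => c⁻¹ * (c * f y) := by funext y; field_simp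
    exact h (this ▸ h'.const_mul c⁻¹)

lemma laplacian_const_mul {n : ℕ} (c : ℝ) (hc : c ≠ 0)
    (f : EuclideanSpace ℝ (Fin n) → ℝ) (x : EuclideanSpace ℝ (Fin n)) :
    laplacian (fun y => c * f y) x = c * laplacian f x := by
  unfold laplacian
  rw [Finset.mul_sum]
  refine Finset.sum_congr rfl fun i _ => ?_
  have h1 : (fun y => fderiv ℝ (fun z => c * f z) y (EuclideanSpace.single i 1))
      = fun y => c * fderiv ℝ f y (EuclideanSpace.single i 1) := by
    funext y
    rw [fderiv_const_mul' c hc f y]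
    simp
  rw [h1, fderiv_const_mul' c hc]
  simp


/-- Liouville transformation, case `1 < μ ≤ 2`: if `u` solves
`∂_s²u - Δu + (μ/(1+s))∂_su = |u|^p` on `[0,∞)×ℝⁿ`, then with `ℓ = (2-μ)/(μ-1)`,
`Λ(t) = (1+t)^{ℓ+1}/(ℓ+1)` and `w(t,x) = (1+t)u(Λ(t)-1,x)`, the function `w`
solves `∂_t²w - (1+t)^{2ℓ}Δw = (1+t)^{2ℓ-(p-1)}|w|^p` for
`t ≥ t₀ = (μ-1)^{1-μ} - 1`. -/
theorem stmt_15 (n : ℕ) (hn : 2 ≤ n) (μ p : ℝ) (hμ1 : 1 < μ) (hμ2 : μ ≤ 2)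
    (hp : 1 < p)
    (u : ℝ → EuclideanSpace ℝ (Fin n) → ℝ)
    (hureg : ∀ x, ContDiff ℝ 2 (fun s => u s x))
    (hu : ∀ s ≥ (0 : ℝ), ∀ x,
      deriv (deriv (fun s' => u s' x)) s - laplacian (u s) x
        + μ / (1 + s) * deriv (fun s' => u s' x) s = |u s x| ^ p)
    (ℓ : ℝ) (hℓ : ℓ = (2 - μ) / (μ - 1))
    (Λ : ℝ → ℝ) (hΛ : ∀ t, Λ t = (1 + t) ^ (ℓ + 1) / (ℓ + 1))
    (w : ℝ → EuclideanSpace ℝ (Fin n) → ℝ)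
    (hw : ∀ t x, w t x = (1 + t) * u (Λ t - 1) x) :
    ∀ t ≥ (μ - 1) ^ (1 - μ) - 1, ∀ x,
      deriv (deriv (fun t' => w t' x)) t - (1 + t) ^ (2 * ℓ) * laplacian (w t) x =
        (1 + t) ^ (2 * ℓ - (p - 1)) * |w t x| ^ p := by
  intro t ht x
  have hμ0 : (0:ℝ) < μ - 1 := by linarith
  have hμ0' : μ - 1 ≠ 0 := ne_of_gt hμ0
  have hℓ0 : 0 ≤ ℓ := by rw [hℓ]; exact div_nonneg (by linarith) (le_of_lt hμ0)
  have hℓ1 : ℓ + 1 = 1 / (μ - 1) := by rw [hℓ]; field_simp; norm_num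
  have hℓ1pos : (0:ℝ) < ℓ + 1 := by linarith
  have hℓ1ne : ℓ + 1 ≠ 0 := ne_of_gt hℓ1pos
  have hbase : (1:ℝ) ≤ (μ - 1) ^ (1 - μ) :=
    Real.one_le_rpow_of_pos_of_le_one_of_nonpos hμ0 (by linarith) (by linarith)
  have hta : (1:ℝ) ≤ 1 + t := by linarith
  have ha : (0:ℝ) < 1 + t := by linarith
  have hane : (1:ℝ) + t ≠ 0 := ne_of_gt ha
  -- Λ t ≥ 1 so that Λ t - 1 ≥ 0
  have hσ : 0 ≤ Λ t - 1 := by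
    have h1 : (μ - 1) ^ ((1 - μ) * (ℓ + 1)) ≤ (1 + t) ^ (ℓ + 1) := by
      rw [Real.rpow_mul (le_of_lt hμ0)]
      exact Real.rpow_le_rpow (Real.rpow_nonneg (le_of_lt hμ0) _) (by linarith)
        (le_of_lt hℓ1pos)
    have h2 : (1 - μ) * (ℓ + 1) = -1 := by rw [hℓ1]; field_simp; ring
    rw [h2, Real.rpow_neg_one] at h1
    have h3 : (μ - 1)⁻¹ = ℓ + 1 := by rw [hℓ1]; field_simp
    rw [h3] at h1
    have : (1:ℝ) ≤ Λ t := by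
      rw [hΛ]
      rw [le_div_iff₀ hℓ1pos]
      linarith
    linarith
  set U : ℝ → ℝ := fun s => u s x with hUdef
  have hU : ContDiff ℝ 2 U := hureg x
  have hU1 : Differentiable ℝ U := hU.differentiable (by norm_num)
  have hU2 : Differentiable ℝ (deriv U) := by
    have h' : ContDiff ℝ ((1:WithTop ℕ∞)+1) U := by norm_num; exact hU
    exact ((contDiff_succ_iff_deriv.mp h').2.2).differentiable (by norm_num)
  set g : ℝ → ℝ := fun t' => (1 + t') ^ (ℓ + 1) / (ℓ + 1) - 1 with hgdef
  have hgΛ : ∀ t', g t' = Λ t' - 1 := fun t' => by rw [hΛ]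
  -- derivative of g
  have hgderiv : ∀ t', HasDerivAt g ((1 + t') ^ ℓ) t' := by
    intro t'
    have h1 : HasDerivAt (fun y : ℝ => 1 + y) 1 t' := by
      simpa using (hasDerivAt_id t').const_add 1
    have h2 := (h1.rpow_const (p := ℓ + 1) (Or.inr (by linarith))).div_const (ℓ + 1)
    have h3 : 1 * (ℓ + 1) * (1 + t') ^ (ℓ + 1 - 1) / (ℓ + 1) = (1 + t') ^ ℓ := by
      rw [show ℓ + 1 - 1 = ℓ by ring]
      field_simp
    rw [h3] at h2
    exact h2.sub_const 1
  -- first derivative of w in t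
  set A : ℝ → ℝ := fun t' => U (g t') + (1 + t') * (deriv U (g t') * (1 + t') ^ ℓ)
    with hAdef
  have hwfun : (fun t' => w t' x) = fun t' => (1 + t') * U (g t') := by
    funext t'
    rw [hw, hgΛ]
  have hA : ∀ t', HasDerivAt (fun t' => w t' x) (A t') t' := by
    intro t'
    rw [hwfun]
    have h1 : HasDerivAt (fun y : ℝ => 1 + y) 1 t' := by
      simpa using (hasDerivAt_id t').const_add 1
    have h2 : HasDerivAt (fun y => U (g y)) (deriv U (g t') * (1 + t') ^ ℓ) t' :=
      (hU1 (g t')).hasDerivAt.comp t' (hgderiv t')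
    have h3 := h1.mul h2
    simpa [hAdef, Pi.mul_def] using h3
  have hderiv1 : deriv (fun t' => w t' x) = A := funext fun t' => (hA t').deriv
  -- second derivative
  -- the PDE at s = g t
  have hpde := hu (Λ t - 1) hσ x
  rw [← hgΛ, ← hUdef] at hpde
  have h1g : 1 + g t = (1 + t) ^ (ℓ + 1) / (ℓ + 1) := by
    simp only [hgdef]; ring
  rw [h1g] at hpde
  -- hpde : deriv (deriv U) (g t) - Y + μ / ((1+t)^(ℓ+1)/(ℓ+1)) * X = Z
  have hQpos : (0:ℝ) < (1 + t) ^ (ℓ + 1) := Real.rpow_pos_of_pos ha _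
  have hQne : (1 + t) ^ (ℓ + 1) ≠ 0 := ne_of_gt hQpos
  have hcoef : μ / ((1 + t) ^ (ℓ + 1) / (ℓ + 1)) = (ℓ + 2) / (1 + t) ^ (ℓ + 1) := by
    have hμℓ : μ * (ℓ + 1) = ℓ + 2 := by
      rw [hℓ1, hℓ]; field_simp; ring
    rw [div_div_eq_mul_div, hμℓ]
  rw [hcoef] at hpde
  set X := deriv U (g t) with hX
  set Y := laplacian (u (g t)) x with hY
  set Z := |U (g t)| ^ p with hZ
  have hU'' : deriv (deriv U) (g t) = Y - (ℓ + 2) / (1 + t) ^ (ℓ + 1) * X + Z := by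
    linarith
  set B : ℝ := X * (1 + t) ^ ℓ +
      (1 * (X * (1 + t) ^ ℓ) +
        (1 + t) * (deriv (deriv U) (g t) * (1 + t) ^ ℓ * (1 + t) ^ ℓ +
          X * (1 * ℓ * (1 + t) ^ (ℓ - 1)))) with hBdef
  have hB : HasDerivAt A B t := by
    have h1 : HasDerivAt (fun y : ℝ => 1 + y) 1 t := by
      simpa using (hasDerivAt_id t).const_add 1
    have h2 : HasDerivAt (fun y => U (g y)) (X * (1 + t) ^ ℓ) t :=
      (hU1 (g t)).hasDerivAt.comp t (hgderiv t)
    have h3 : HasDerivAt (fun y => deriv U (g y))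
        (deriv (deriv U) (g t) * (1 + t) ^ ℓ) t :=
      (hU2 (g t)).hasDerivAt.comp t (hgderiv t)
    have h4 : HasDerivAt (fun y : ℝ => (1 + y) ^ ℓ) (1 * ℓ * (1 + t) ^ (ℓ - 1)) t :=
      h1.rpow_const (Or.inl hane)
    exact h2.add (h1.mul (h3.mul h4))
  have hderiv2 : deriv (deriv (fun t' => w t' x)) t = B := by
    rw [hderiv1]; exact hB.deriv
  -- laplacian of w t
  have hlap : laplacian (w t) x = (1 + t) * Y := by
    have hwt : w t = fun y => (1 + t) * u (Λ t - 1) y := funext fun y => hw t y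
    rw [hwt, laplacian_const_mul (1 + t) hane, ← hgΛ]
  -- right-hand side
  have hwtx : |w t x| ^ p = (1 + t) ^ p * Z := by
    rw [hw, ← hgΛ, abs_mul, abs_of_pos ha, Real.mul_rpow (le_of_lt ha) (abs_nonneg _)]
  rw [hderiv2, hlap, hwtx, hBdef, hU'']
  -- now pure rpow algebra
  have e1 : (1 + t) ^ ℓ * (1 + t) ^ ℓ = (1 + t) ^ (2 * ℓ) := by
    rw [← Real.rpow_add ha]; ring_nf
  have e2 : (1 + t) * (1 + t) ^ (ℓ - 1) = (1 + t) ^ ℓ := by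
    rw [show ℓ = (ℓ - 1) + 1 by ring, Real.rpow_add_one hane]; ring
  have e3 : (1 + t) * (1 + t) ^ (2 * ℓ) = (1 + t) ^ (2 * ℓ + 1) := by
    rw [Real.rpow_add_one hane]; ring
  have e4 : (1 + t) ^ (2 * ℓ + 1) / (1 + t) ^ (ℓ + 1) = (1 + t) ^ ℓ := by
    rw [← Real.rpow_sub ha]; ring_nf
  have e5 : (1 + t) ^ (2 * ℓ - (p - 1)) * ((1 + t) ^ p * Z) = (1 + t) ^ (2 * ℓ + 1) * Z := by
    rw [← mul_assoc, ← Real.rpow_add ha]; ring_nf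
  rw [e5]
  have key : X * (1 + t) ^ ℓ + (1 * (X * (1 + t) ^ ℓ) +
      (1 + t) * ((Y - (ℓ + 2) / (1 + t) ^ (ℓ + 1) * X + Z) * (1 + t) ^ ℓ * (1 + t) ^ ℓ +
        X * (1 * ℓ * (1 + t) ^ (ℓ - 1)))) -
      (1 + t) ^ (2 * ℓ) * ((1 + t) * Y) = (1 + t) ^ (2 * ℓ + 1) * Z := by
    have expand : (1 + t) * ((Y - (ℓ + 2) / (1 + t) ^ (ℓ + 1) * X + Z) *
        (1 + t) ^ ℓ * (1 + t) ^ ℓ + X * (1 * ℓ * (1 + t) ^ (ℓ - 1)))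
        = (1 + t) ^ (2 * ℓ + 1) * Y
          - (ℓ + 2) * (1 + t) ^ ℓ * X
          + (1 + t) ^ (2 * ℓ + 1) * Z
          + ℓ * X * (1 + t) ^ ℓ := by
      have : (Y - (ℓ + 2) / (1 + t) ^ (ℓ + 1) * X + Z) * (1 + t) ^ ℓ * (1 + t) ^ ℓ
          = (Y + Z) * (1 + t) ^ (2 * ℓ)
            - (ℓ + 2) * X * ((1 + t) ^ (2 * ℓ) / (1 + t) ^ (ℓ + 1)) := by
        rw [mul_assoc, e1]; ring
      rw [this]
      have e6 : (1 + t) * ((Y + Z) * (1 + t) ^ (2 * ℓ)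
          - (ℓ + 2) * X * ((1 + t) ^ (2 * ℓ) / (1 + t) ^ (ℓ + 1))
          + X * (1 * ℓ * (1 + t) ^ (ℓ - 1)))
          = (Y + Z) * ((1 + t) * (1 + t) ^ (2 * ℓ))
            - (ℓ + 2) * X * ((1 + t) * (1 + t) ^ (2 * ℓ) / (1 + t) ^ (ℓ + 1))
            + X * ℓ * ((1 + t) * (1 + t) ^ (ℓ - 1)) := by ring
      rw [e6, e2, e3, e4]; ring
    rw [expand]
    have e7 : (1 + t) ^ (2 * ℓ) * ((1 + t) * Y) = (1 + t) ^ (2 * ℓ + 1) * Y := by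
      rw [← e3]; ring
    rw [e7]; ring
  exact key
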